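/- Consider the BLESS model with p = 2K observed variables and the parent map s given by s(j) = j and s(K + j) = j for every j ∈ {1,…,K} (so each latent variable α_k has exactly the two observed children y_k and y_{K+k}). Let (s, θ, ν) be a valid parameter set and let (s̄, θ̄, ν̄) be another valid parameter set with an arbitrary parent map s̄ : {1,…,2K} → {1,…,K}, such that their joint probability mass functions agree. Let h ∈ {1,…,K}, let A ⊆ {1,…,K}\{h}, and let B ⊆ {K+1,…,2K} be such that K + h ∉ B and K + k ∈ B for every k ∈ A. Then s̄(h) ∉ {s̄(k) : k ∈ A}. -/

import Mathlib

open Finset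

/-- Joint probability mass function of the observed vector `c : Fin p → Fin d` under the
BLESS model with parent map `s`, conditional probability tables `θ` (where `θ j c x` is
`θ^{(j)}_{c|x}`), and latent proportion vector `ν`. -/
def blessPMF {K p d : ℕ} (s : Fin p → Fin K) (θ : Fin p → Fin d → Bool → ℝ)
    (ν : (Fin K → Bool) → ℝ) (c : Fin p → Fin d) : ℝ :=
  ∑ α : Fin K → Bool, ν α * ∏ j, θ j (c j) (α (s j))

/-- Validity of a BLESS parameter set `(θ, ν)`: all conditional probabilities strictly
between 0 and 1, columns of each conditional probability table summing to one, the
monotonicity constraint `θ^{(j)}_{c|1} > θ^{(j)}_{c|0}` for every non-last category `c`,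
strictly positive proportions summing to one. -/
structure BlessValid {K p d : ℕ} (θ : Fin p → Fin d → Bool → ℝ)
    (ν : (Fin K → Bool) → ℝ) : Prop where
  theta_pos : ∀ j c x, 0 < θ j c x
  theta_lt_one : ∀ j c x, θ j c x < 1
  theta_sum : ∀ j x, ∑ c, θ j c x = 1
  theta_mono : ∀ j (c : Fin d), (c : ℕ) + 1 < d → θ j c false < θ j c true
  nu_pos : ∀ α, 0 < ν α
  nu_sum : ∑ α, ν α = 1

/-- The "doubled" parent map on `p = 2K` observed variables: `s(j) = j` and
`s(K + j) = j` for `j ∈ {1,…,K}`, so each latent variable `α_k` has exactly the two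
observed children `y_k` and `y_{K+k}`. -/
def sdup (K : ℕ) : Fin (K + K) → Fin K := fun j =>
  if h : (j : ℕ) < K then ⟨j, h⟩ else ⟨(j : ℕ) - K, by have := j.isLt; omega⟩

private lemma sdup_castAdd {K : ℕ} (j : Fin K) : sdup K (Fin.castAdd K j) = j := by
  simp [sdup, Fin.ext_iff]

private lemma sdup_natAdd {K : ℕ} (j : Fin K) : sdup K (Fin.natAdd K j) = j := by
  have h : ¬ ((Fin.natAdd K j : ℕ) < K) := by simp
  simp [sdup, h, Fin.ext_iff]

private lemma contract {K p d : ℕ} (s : Fin p → Fin K) (θ : Fin p → Fin d → Bool → ℝ)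
    (ν : (Fin K → Bool) → ℝ) (w : Fin p → Fin d → ℝ) :
    ∑ c : Fin p → Fin d, (∏ j, w j (c j)) * blessPMF s θ ν c
      = ∑ α : Fin K → Bool, ν α * ∏ j, ∑ cat, w j cat * θ j cat (α (s j)) := by
  unfold blessPMF
  simp only [Finset.mul_sum]
  rw [Finset.sum_comm]
  refine Finset.sum_congr rfl fun α _ => ?_
  rw [Finset.prod_univ_sum, Fintype.piFinset_univ, Finset.mul_sum]
  refine Finset.sum_congr rfl fun c _ => ?_
  rw [Finset.prod_mul_distrib]
  ring

private lemma dual_weights {d : ℕ} (hd : 2 ≤ d) (v : Bool → Fin d → ℝ)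
    (hsum : ∀ z, ∑ cat, v z cat = 1)
    (hlt : v false ⟨0, by omega⟩ < v true ⟨0, by omega⟩) :
    ∃ φ : Bool → Fin d → ℝ, ∀ x z, (∑ cat, φ x cat * v z cat) = if x = z then 1 else 0 := by
  have h0 : 0 < d := by omega
  have hΔ : 0 < v true ⟨0, h0⟩ - v false ⟨0, h0⟩ := sub_pos.mpr hlt
  have hΔ' : v true ⟨0, h0⟩ - v false ⟨0, h0⟩ ≠ 0 := ne_of_gt hΔ
  refine ⟨fun x cat => if x then ((if cat = ⟨0, h0⟩ then 1 else 0) - v false ⟨0, h0⟩) / (v true ⟨0, h0⟩ - v false ⟨0, h0⟩)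
                       else 1 - ((if cat = ⟨0, h0⟩ then 1 else 0) - v false ⟨0, h0⟩) / (v true ⟨0, h0⟩ - v false ⟨0, h0⟩), ?_⟩
  have key : ∀ z, (∑ cat, ((if cat = (⟨0, h0⟩ : Fin d) then (1:ℝ) else 0) - v false ⟨0, h0⟩) / (v true ⟨0, h0⟩ - v false ⟨0, h0⟩) * v z cat)
      = (v z ⟨0, h0⟩ - v false ⟨0, h0⟩) / (v true ⟨0, h0⟩ - v false ⟨0, h0⟩) := by
    intro z
    have h1 : ∀ cat, ((if cat = (⟨0, h0⟩ : Fin d) then (1:ℝ) else 0) - v false ⟨0, h0⟩) / (v true ⟨0, h0⟩ - v false ⟨0, h0⟩) * v z cat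
        = ((if cat = (⟨0, h0⟩ : Fin d) then v z cat else 0) - v false ⟨0, h0⟩ * v z cat) / (v true ⟨0, h0⟩ - v false ⟨0, h0⟩) := by
      intro cat; split <;> ring
    simp only [h1]
    rw [← Finset.sum_div, Finset.sum_sub_distrib, Finset.sum_ite_eq', ← Finset.mul_sum, hsum z]
    simp
  intro x z
  cases x
  · have h2 : ∀ cat, (1 - ((if cat = (⟨0, h0⟩ : Fin d) then (1:ℝ) else 0) - v false ⟨0, h0⟩) / (v true ⟨0, h0⟩ - v false ⟨0, h0⟩)) * v z cat
        = v z cat - ((if cat = (⟨0, h0⟩ : Fin d) then (1:ℝ) else 0) - v false ⟨0, h0⟩) / (v true ⟨0, h0⟩ - v false ⟨0, h0⟩) * v z cat :=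
      fun cat => by ring
    simp only [Bool.false_eq_true, if_false, h2]
    rw [Finset.sum_sub_distrib, hsum z, key z]
    cases z
    · simp
    · rw [div_self hΔ']
      simp
  · simp only [if_true]
    rw [key z]
    cases z
    · simp
    · rw [div_self hΔ']
      simp

private lemma prod_eq_four {n : ℕ} (f : Fin n → ℝ) (a b c e : Fin n)
    (hab : a ≠ b) (hac : a ≠ c) (hae : a ≠ e) (hbc : b ≠ c) (hbe : b ≠ e) (hce : c ≠ e)
    (hother : ∀ j, j ≠ a → j ≠ b → j ≠ c → j ≠ e → f j = 1) :
    ∏ j, f j = f a * (f b * (f c * f e)) := by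
  have hsub : ∏ j ∈ ({a, b, c, e} : Finset (Fin n)), f j = ∏ j, f j :=
    Finset.prod_subset (Finset.subset_univ _) (by
      intro x _ hx
      simp only [Finset.mem_insert, Finset.mem_singleton, not_or] at hx
      exact hother x hx.1 hx.2.1 hx.2.2.1 hx.2.2.2)
  rw [← hsub]
  rw [show ({a, b, c, e} : Finset (Fin n)) = insert a (insert b (insert c {e})) from rfl]
  rw [Finset.prod_insert (by simp [hab, hac, hae]),
      Finset.prod_insert (by simp [hbc, hbe]),
      Finset.prod_insert (by simp [hce]), Finset.prod_singleton]

private lemma key_rank (P : Bool × Bool → Bool × Bool → ℝ)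
    (hpos : ∀ w, 0 < P w w) (hzero : ∀ w u, w ≠ u → P w u = 0)
    (C : Bool × Bool → Bool → ℝ) (q : Bool → Bool × Bool → ℝ)
    (hfac : ∀ w u, P w u = C w false * q false u + C w true * q true u) : False := by
  have h12 : ((false, false) : Bool × Bool) ≠ (false, true) := by simp
  have h13 : ((false, false) : Bool × Bool) ≠ (true, false) := by simp
  have h23 : ((false, true) : Bool × Bool) ≠ (true, false) := by simp
  have e11 := hfac (false, false) (false, false)
  have e12 := (hfac (false, false) (false, true)).symm.trans (hzero _ _ h12)
  have e13 := (hfac (false, false) (true, false)).symm.trans (hzero _ _ h13)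
  have e22 := hfac (false, true) (false, true)
  have e23 := (hfac (false, true) (true, false)).symm.trans (hzero _ _ h23)
  have e33 := hfac (true, false) (true, false)
  have p1 := hpos (false, false)
  have p2 := hpos (false, true)
  have p3 := hpos (true, false)
  by_cases hcr : q false (false, true) * q true (true, false)
      - q true (false, true) * q false (true, false) = 0
  · have hb2 : q true (true, false) * P (false, true) (false, true) = 0 := by
      linear_combination q true (true, false) * e22 + C (false, true) false * hcr
        + q true (false, true) * e23
    have hb1 : q false (true, false) * P (false, true) (false, true) = 0 := by
      linear_combination q false (true, false) * e22 - C (false, true) true * hcr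
        + q false (false, true) * e23
    have hb2' : q true (true, false) = 0 := by
      rcases mul_eq_zero.mp hb2 with h | h
      · exact h
      · exact absurd h (ne_of_gt p2)
    have hb1' : q false (true, false) = 0 := by
      rcases mul_eq_zero.mp hb1 with h | h
      · exact h
      · exact absurd h (ne_of_gt p2)
    rw [hb1', hb2'] at e33
    simp at e33
    linarith
  · have hcf : C (false, false) false * (q false (false, true) * q true (true, false)
      - q true (false, true) * q false (true, false)) = 0 := by
      linear_combination q true (true, false) * e12 - q true (false, true) * e13
    have hct : C (false, false) true * (q false (false, true) * q true (true, false)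
      - q true (false, true) * q false (true, false)) = 0 := by
      linear_combination (- q false (true, false)) * e12 + q false (false, true) * e13
    have hf : C (false, false) false = 0 := by
      rcases mul_eq_zero.mp hcf with h | h
      · exact h
      · exact absurd h hcr
    have ht : C (false, false) true = 0 := by
      rcases mul_eq_zero.mp hct with h | h
      · exact h
      · exact absurd h hcr
    rw [hf, ht] at e11
    simp at e11
    linarith

/-- under the doubled parent map, if an alternative valid parameter set
with arbitrary parent map `sb` gives the same joint distribution, and `A`, `B` are as in
the hypotheses (with `K + h ∉ B` and `K + k ∈ B` for all `k ∈ A`), then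
`sb(h) ∉ {sb(k) : k ∈ A}`. -/
theorem bless_graph_separation {K d : ℕ} (hd : 2 ≤ d)
    (θ θb : Fin (K + K) → Fin d → Bool → ℝ) (ν νb : (Fin K → Bool) → ℝ)
    (sb : Fin (K + K) → Fin K)
    (h1 : BlessValid θ ν) (h2 : BlessValid θb νb)
    (heq : ∀ c, blessPMF (sdup K) θ ν c = blessPMF sb θb νb c)
    (h : Fin K) (A : Finset (Fin K)) (hA : h ∉ A)
    (B : Finset (Fin (K + K))) (hB : ∀ j ∈ B, K ≤ (j : ℕ))
    (hhB : Fin.natAdd K h ∉ B) (hAB : ∀ k ∈ A, Fin.natAdd K k ∈ B) :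
    ∀ k ∈ A, sb (Fin.castAdd K h) ≠ sb (Fin.castAdd K k) := by
  classical
  intro k hk hne
  have hpd : 0 < d := by omega
  have hkh : k ≠ h := fun e => hA (e ▸ hk)
  have hvkh : (k : ℕ) ≠ (h : ℕ) := fun e => hkh (Fin.ext e)
  have hhK := h.isLt
  have hkK := k.isLt
  have d12 : Fin.castAdd K h ≠ Fin.castAdd K k := by
    intro e; have := congrArg Fin.val e; simp at this; omega
  have d13 : Fin.castAdd K h ≠ Fin.natAdd K h := by
    intro e; have := congrArg Fin.val e; simp at this; omega
  have d14 : Fin.castAdd K h ≠ Fin.natAdd K k := by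
    intro e; have := congrArg Fin.val e; simp at this; omega
  have d23 : Fin.castAdd K k ≠ Fin.natAdd K h := by
    intro e; have := congrArg Fin.val e; simp at this; omega
  have d24 : Fin.castAdd K k ≠ Fin.natAdd K k := by
    intro e; have := congrArg Fin.val e; simp at this; omega
  have d34 : Fin.natAdd K h ≠ Fin.natAdd K k := by
    intro e; have := congrArg Fin.val e; simp at this; omega
  obtain ⟨φ1, hφ1⟩ := dual_weights hd (fun z cat => θ (Fin.castAdd K h) cat z)
      (fun z => h1.theta_sum _ z) (by exact h1.theta_mono _ ⟨0, hpd⟩ (by show 0 + 1 < d; omega))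
  obtain ⟨φ2, hφ2⟩ := dual_weights hd (fun z cat => θ (Fin.castAdd K k) cat z)
      (fun z => h1.theta_sum _ z) (by exact h1.theta_mono _ ⟨0, hpd⟩ (by show 0 + 1 < d; omega))
  obtain ⟨φ3, hφ3⟩ := dual_weights hd (fun z cat => θ (Fin.natAdd K h) cat z)
      (fun z => h1.theta_sum _ z) (by exact h1.theta_mono _ ⟨0, hpd⟩ (by show 0 + 1 < d; omega))
  obtain ⟨φ4, hφ4⟩ := dual_weights hd (fun z cat => θ (Fin.natAdd K k) cat z)
      (fun z => h1.theta_sum _ z) (by exact h1.theta_mono _ ⟨0, hpd⟩ (by show 0 + 1 < d; omega))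
  set m := sb (Fin.castAdd K h) with hm
  have hmk : sb (Fin.castAdd K k) = m := hne.symm
  set W : Bool → Bool → Bool → Bool → Fin (K + K) → Fin d → ℝ := fun x' y' x y j =>
    if j = Fin.castAdd K h then φ1 x' else if j = Fin.castAdd K k then φ2 y'
    else if j = Fin.natAdd K h then φ3 x else if j = Fin.natAdd K k then φ4 y
    else fun _ => 1 with hW
  have W1 : ∀ x' y' x y, W x' y' x y (Fin.castAdd K h) = φ1 x' := by
    intro x' y' x y; simp only [hW, if_true]
  have W2 : ∀ x' y' x y, W x' y' x y (Fin.castAdd K k) = φ2 y' := by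
    intro x' y' x y; simp only [hW, if_true]; rw [if_neg d12.symm]
  have W3 : ∀ x' y' x y, W x' y' x y (Fin.natAdd K h) = φ3 x := by
    intro x' y' x y; simp only [hW, if_true]; rw [if_neg d13.symm, if_neg d23.symm]
  have W4 : ∀ x' y' x y, W x' y' x y (Fin.natAdd K k) = φ4 y := by
    intro x' y' x y; simp only [hW, if_true]
    rw [if_neg d14.symm, if_neg d24.symm, if_neg d34.symm]
  have W5 : ∀ x' y' x y j, j ≠ Fin.castAdd K h → j ≠ Fin.castAdd K k →
      j ≠ Fin.natAdd K h → j ≠ Fin.natAdd K k → W x' y' x y j = fun _ => 1 := by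
    intro x' y' x y j hj1 hj2 hj3 hj4; simp only [hW]
    rw [if_neg hj1, if_neg hj2, if_neg hj3, if_neg hj4]
  have hT : ∀ x' y' x y : Bool,
      (∑ α : Fin K → Bool, ν α * ∏ j, ∑ cat, W x' y' x y j cat * θ j cat (α (sdup K j)))
        = ∑ α : Fin K → Bool, νb α * ∏ j, ∑ cat, W x' y' x y j cat * θb j cat (α (sb j)) := by
    intro x' y' x y
    rw [← contract, ← contract]
    exact Finset.sum_congr rfl fun c _ => by rw [heq c]
  have hL : ∀ x' y' x y : Bool,
      (∑ α : Fin K → Bool, ν α * ∏ j, ∑ cat, W x' y' x y j cat * θ j cat (α (sdup K j)))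
        = ∑ α : Fin K → Bool, ν α * ((if x' = α h then (1:ℝ) else 0) *
            ((if y' = α k then (1:ℝ) else 0) *
             ((if x = α h then (1:ℝ) else 0) * (if y = α k then (1:ℝ) else 0)))) := by
    intro x' y' x y
    refine Finset.sum_congr rfl fun α _ => ?_
    congr 1
    rw [prod_eq_four (fun j => ∑ cat, W x' y' x y j cat * θ j cat (α (sdup K j)))
          (Fin.castAdd K h) (Fin.castAdd K k) (Fin.natAdd K h) (Fin.natAdd K k)
          d12 d13 d14 d23 d24 d34 ?_]
    · rw [sdup_castAdd h, sdup_castAdd k, sdup_natAdd h, sdup_natAdd k,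
          W1, W2, W3, W4, hφ1, hφ2, hφ3, hφ4]
    · intro j hj1 hj2 hj3 hj4
      rw [W5 x' y' x y j hj1 hj2 hj3 hj4]
      simpa using h1.theta_sum j (α (sdup K j))
  have hR : ∀ x' y' x y : Bool,
      (∑ α : Fin K → Bool, νb α * ∏ j, ∑ cat, W x' y' x y j cat * θb j cat (α (sb j)))
        = ∑ α : Fin K → Bool, νb α *
            ((∑ cat, φ1 x' cat * θb (Fin.castAdd K h) cat (α m)) *
             ((∑ cat, φ2 y' cat * θb (Fin.castAdd K k) cat (α m)) *
              ((∑ cat, φ3 x cat * θb (Fin.natAdd K h) cat (α (sb (Fin.natAdd K h)))) *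
               (∑ cat, φ4 y cat * θb (Fin.natAdd K k) cat (α (sb (Fin.natAdd K k))))))) := by
    intro x' y' x y
    refine Finset.sum_congr rfl fun α _ => ?_
    congr 1
    rw [prod_eq_four (fun j => ∑ cat, W x' y' x y j cat * θb j cat (α (sb j)))
          (Fin.castAdd K h) (Fin.castAdd K k) (Fin.natAdd K h) (Fin.natAdd K k)
          d12 d13 d14 d23 d24 d34 ?_]
    · rw [W1, W2, W3, W4, ← hm, hmk]
    · intro j hj1 hj2 hj3 hj4
      rw [W5 x' y' x y j hj1 hj2 hj3 hj4]
      simpa using h2.theta_sum j (α (sb j))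
  have hfib : ∀ x' y' x y : Bool,
      (∑ α : Fin K → Bool, νb α *
            ((∑ cat, φ1 x' cat * θb (Fin.castAdd K h) cat (α m)) *
             ((∑ cat, φ2 y' cat * θb (Fin.castAdd K k) cat (α m)) *
              ((∑ cat, φ3 x cat * θb (Fin.natAdd K h) cat (α (sb (Fin.natAdd K h)))) *
               (∑ cat, φ4 y cat * θb (Fin.natAdd K k) cat (α (sb (Fin.natAdd K k))))))))
        = ∑ z : Bool,
            ((∑ cat, φ1 x' cat * θb (Fin.castAdd K h) cat z) *
             (∑ cat, φ2 y' cat * θb (Fin.castAdd K k) cat z)) *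
            (∑ α ∈ Finset.univ.filter (fun α : Fin K → Bool => α m = z),
               νb α * ((∑ cat, φ3 x cat * θb (Fin.natAdd K h) cat (α (sb (Fin.natAdd K h)))) *
                        (∑ cat, φ4 y cat * θb (Fin.natAdd K k) cat (α (sb (Fin.natAdd K k)))))) := by
    intro x' y' x y
    rw [← Finset.sum_fiberwise Finset.univ (fun α : Fin K → Bool => α m)]
    refine Finset.sum_congr rfl fun z _ => ?_
    rw [Finset.mul_sum]
    refine Finset.sum_congr rfl fun α hα => ?_
    rw [(Finset.mem_filter.mp hα).2]
    ring
  refine key_rank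
    (fun w u => ∑ α : Fin K → Bool, ν α * ((if w.1 = α h then (1:ℝ) else 0) *
        ((if w.2 = α k then (1:ℝ) else 0) *
         ((if u.1 = α h then (1:ℝ) else 0) * (if u.2 = α k then (1:ℝ) else 0)))))
    ?_ ?_
    (fun w z => (∑ cat, φ1 w.1 cat * θb (Fin.castAdd K h) cat z) *
        (∑ cat, φ2 w.2 cat * θb (Fin.castAdd K k) cat z))
    (fun z u => ∑ α ∈ Finset.univ.filter (fun α : Fin K → Bool => α m = z),
        νb α * ((∑ cat, φ3 u.1 cat * θb (Fin.natAdd K h) cat (α (sb (Fin.natAdd K h)))) *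
                 (∑ cat, φ4 u.2 cat * θb (Fin.natAdd K k) cat (α (sb (Fin.natAdd K k))))))
    ?_
  · rintro ⟨x, y⟩
    refine Finset.sum_pos' (fun α _ => ?_) ?_
    · refine mul_nonneg (h1.nu_pos α).le ?_
      refine mul_nonneg ?_ (mul_nonneg ?_ (mul_nonneg ?_ ?_)) <;>
        · dsimp only
          split <;> norm_num
    · refine ⟨(fun i => if i = h then x else if i = k then y else false),
        Finset.mem_univ _, ?_⟩
      have := h1.nu_pos (fun i => if i = h then x else if i = k then y else false)
      simpa [hkh] using this
  · rintro ⟨x', y'⟩ ⟨x, y⟩ hne'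
    rw [Ne, Prod.mk.injEq, not_and_or] at hne'
    refine Finset.sum_eq_zero fun α _ => ?_
    rcases hne' with hx | hy
    · by_cases hxa : x' = α h
      · have hxb : ¬ (x = α h) := fun e => hx (hxa.trans e.symm)
        simp [hxb]
      · simp [hxa]
    · by_cases hya : y' = α k
      · have hyb : ¬ (y = α k) := fun e => hy (hya.trans e.symm)
        simp [hyb]
      · simp [hya]
  · rintro ⟨x', y'⟩ ⟨x, y⟩
    have hchain := (hL x' y' x y).symm.trans
      ((hT x' y' x y).trans ((hR x' y' x y).trans (hfib x' y' x y)))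
    exact hchain.trans (by rw [Fintype.sum_bool]; ring)
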